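/- Let H^l_k and Θ̃^m_n denote, in cylindrical coordinates (x, ρ, θ), the vector fields H^l_k = (k-2l+1) x^{2l+1} ρ^{2(k-2l)} ∂/∂x - ((2l+1)/2) x^{2l} ρ^{2(k-2l)+1} ∂/∂ρ and Θ̃^m_n = x^{2m} ρ^{2(n-2m)} ∂/∂θ. Then the Lie brackets satisfy: [H^l_k, H^m_n] = ((2m+1)(k+2) - (2l+1)(n+2)) H^{l+m}_{k+n}, [H^l_k, Θ̃^m_n] = (2m(k+2) - n(2l+1)) Θ̃^{l+m}_{k+n}, and [Θ̃^l_k, Θ̃^m_n] = 0, for all integers with 0 ≤ 2l ≤ k and 0 ≤ 2m ≤ n. -/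

import Mathlib

/-- A vector field on `ℝ³` in cylindrical coordinates `(x, ρ, θ)`. -/
abbrev VF := ℝ → ℝ → ℝ → ℝ × ℝ × ℝ

noncomputable def pX (f : ℝ → ℝ → ℝ → ℝ) (x ρ θ : ℝ) : ℝ := deriv (fun t => f t ρ θ) x
noncomputable def pR (f : ℝ → ℝ → ℝ → ℝ) (x ρ θ : ℝ) : ℝ := deriv (fun t => f x t θ) ρ
noncomputable def pT (f : ℝ → ℝ → ℝ → ℝ) (x ρ θ : ℝ) : ℝ := deriv (fun t => f x ρ t) θ

def c1 (v : VF) : ℝ → ℝ → ℝ → ℝ := fun a b c => (v a b c).1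
def c2 (v : VF) : ℝ → ℝ → ℝ → ℝ := fun a b c => (v a b c).2.1
def c3 (v : VF) : ℝ → ℝ → ℝ → ℝ := fun a b c => (v a b c).2.2

/-- Directional derivative of a function along a vector field. -/
noncomputable def dirDeriv (v : VF) (f : ℝ → ℝ → ℝ → ℝ) (x ρ θ : ℝ) : ℝ :=
  c1 v x ρ θ * pX f x ρ θ + c2 v x ρ θ * pR f x ρ θ + c3 v x ρ θ * pT f x ρ θ

/-- The Jacobi–Lie bracket `[u,v] = uv - vu` of vector fields. -/
noncomputable def lieBracket (u v : VF) : VF := fun x ρ θ =>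
  (dirDeriv u (c1 v) x ρ θ - dirDeriv v (c1 u) x ρ θ,
   dirDeriv u (c2 v) x ρ θ - dirDeriv v (c2 u) x ρ θ,
   dirDeriv u (c3 v) x ρ θ - dirDeriv v (c3 u) x ρ θ)

/-- `H^l_k = (k-2l+1) x^{2l+1} ρ^{2(k-2l)} ∂/∂x - ((2l+1)/2) x^{2l} ρ^{2(k-2l)+1} ∂/∂ρ`. -/
noncomputable def H (l k : ℕ) : VF := fun x ρ _ =>
  (((k : ℝ) - 2 * (l : ℝ) + 1) * x ^ (2 * l + 1) * ρ ^ (2 * (k - 2 * l)),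
   -((2 * (l : ℝ) + 1) / 2) * x ^ (2 * l) * ρ ^ (2 * (k - 2 * l) + 1),
   0)

/-- `Θ̃^m_n = x^{2m} ρ^{2(n-2m)} ∂/∂θ`. -/
noncomputable def Th (m n : ℕ) : VF := fun x ρ _ =>
  (0, 0, x ^ (2 * m) * ρ ^ (2 * (n - 2 * m)))


lemma dA (C D x : ℝ) (a : ℕ) : deriv (fun t : ℝ => C * t ^ a * D) x = C * a * x ^ (a - 1) * D := by
  have h : (fun t : ℝ => C * t ^ a * D) = fun t => (C * D) * t ^ a := by funext t; ring
  rw [h, deriv_const_mul _ (differentiable_pow a).differentiableAt, deriv_pow_field]; ring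

lemma dB (E x : ℝ) (a : ℕ) : deriv (fun t : ℝ => E * t ^ a) x = E * a * x ^ (a - 1) := by
  rw [deriv_const_mul _ (differentiable_pow a).differentiableAt, deriv_pow_field]; ring

lemma dC (D x : ℝ) (a : ℕ) : deriv (fun t : ℝ => t ^ a * D) x = a * x ^ (a - 1) * D := by
  have h : (fun t : ℝ => t ^ a * D) = fun t => D * t ^ a := by funext t; ring
  rw [h, deriv_const_mul _ (differentiable_pow a).differentiableAt, deriv_pow_field]; ring

set_option maxHeartbeats 1600000 in

/-- Structure constants of the Lie algebra spanned by the `H`- and `Θ̃`-terms: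
`[H^l_k, H^m_n] = ((2m+1)(k+2) - (2l+1)(n+2)) H^{l+m}_{k+n}`,
`[H^l_k, Θ̃^m_n] = (2m(k+2) - n(2l+1)) Θ̃^{l+m}_{k+n}`, and `[Θ̃^l_k, Θ̃^m_n] = 0`. -/
theorem structure_constants (l k m n : ℕ) (hlk : 2 * l ≤ k) (hmn : 2 * m ≤ n) :
    (∀ x ρ θ : ℝ,
      lieBracket (H l k) (H m n) x ρ θ =
        ((2 * (m : ℝ) + 1) * ((k : ℝ) + 2) - (2 * (l : ℝ) + 1) * ((n : ℝ) + 2)) •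
          H (l + m) (k + n) x ρ θ) ∧
    (∀ x ρ θ : ℝ,
      lieBracket (H l k) (Th m n) x ρ θ =
        (2 * (m : ℝ) * ((k : ℝ) + 2) - (n : ℝ) * (2 * (l : ℝ) + 1)) •
          Th (l + m) (k + n) x ρ θ) ∧
    (∀ x ρ θ : ℝ, lieBracket (Th l k) (Th m n) x ρ θ = 0) := by
  
  obtain ⟨k', rfl⟩ : ∃ k', k = 2 * l + k' := ⟨k - 2 * l, by omega⟩
  obtain ⟨n', rfl⟩ : ∃ n', n = 2 * m + n' := ⟨n - 2 * m, by omega⟩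
  have e1 : 2 * l + k' - 2 * l = k' := by omega
  have e2 : 2 * m + n' - 2 * m = n' := by omega
  have e3 : 2 * l + k' + (2 * m + n') - 2 * (l + m) = k' + n' := by omega
  refine ⟨fun x ρ θ => ?_, fun x ρ θ => ?_, fun x ρ θ => ?_⟩
  · simp only [lieBracket, dirDeriv, c1, c2, c3, pX, pR, pT, H, Th, e1, e2, e3,
      deriv_const', dA, dB, dC, smul_eq_mul, Prod.smul_mk, Prod.mk.injEq]
    rcases l with _ | l <;> rcases m with _ | m <;> rcases k' with _ | k' <;> rcases n' with _ | n' <;>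
    · try simp only [show ∀ q : ℕ, 2 * (q + 1) - 1 = 2 * q + 1 from fun q => by omega,
        Nat.add_sub_cancel]
      push_cast
      exact ⟨by ring, by ring, by ring⟩
  · simp only [lieBracket, dirDeriv, c1, c2, c3, pX, pR, pT, H, Th, e1, e2, e3,
      deriv_const', dA, dB, dC, smul_eq_mul, Prod.smul_mk, Prod.mk.injEq]
    rcases l with _ | l <;> rcases m with _ | m <;> rcases k' with _ | k' <;> rcases n' with _ | n' <;>
    · try simp only [show ∀ q : ℕ, 2 * (q + 1) - 1 = 2 * q + 1 from fun q => by omega,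
        Nat.add_sub_cancel]
      push_cast
      exact ⟨by ring, by ring, by ring⟩
  · simp [lieBracket, dirDeriv, c1, c2, c3, pX, pR, pT, Th]
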